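/- Let X be a connected locally finite graph with infinite motion, R ≥ 5 odd, Y ⊆ X a (2R+1)-separated, 2R-coarsely dense subset, and ψ the partial 2-coloring defined by ψ(x) = 0 if d(x,Y) ∈ {0,1}, ψ(x) = 1 if d(x,Y) = 2 or d(x,Y) ∈ {4,6,…,R−1} or d(x,Y) > R, and ψ undefined when d(x,Y) is odd and 3 ≤ d(x,Y) ≤ R. Then for every coloring φ: X → {0,1} extending ψ and every automorphism f of X preserving φ, f(Y) = Y. -/

import Mathlib

/-- Let `X` be connected, locally finite, with infinite motion, `R ≥ 5` odd, `Y` a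
`(2R+1)`-separated `2R`-coarsely dense subset, and `φ` a 2-coloring extending the
partial coloring `ψ` (color 0 at distance 0,1 from `Y`; color 1 at distance 2, at even
distances `4 ≤ d ≤ R-1`, and at distance `> R`).  Then every `φ`-preserving
automorphism maps `Y` onto `Y`. -/
theorem stmt_13 {V : Type*} (G : SimpleGraph V) (hconn : G.Connected)
    (hlf : G.LocallyFinite)
    (hmotion : ∀ f : G ≃g G, {v : V | f v ≠ v}.Finite → ∀ v, f v = v)
    (R : ℕ) (hR : 5 ≤ R) (hodd : Odd R) (Y : Set V)
    (hsep : ∀ y ∈ Y, ∀ y' ∈ Y, y ≠ y' → 2 * R + 1 ≤ G.dist y y')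
    (hdense : ∀ x : V, ∃ y ∈ Y, G.dist x y ≤ 2 * R)
    (dY : V → ℕ) (hdY : ∀ x : V, dY x = sInf {n : ℕ | ∃ y ∈ Y, G.dist x y = n})
    (φ : V → Fin 2)
    (h0 : ∀ x : V, dY x ≤ 1 → φ x = 0)
    (h2 : ∀ x : V, dY x = 2 → φ x = 1)
    (hA : ∀ x : V, Even (dY x) → 4 ≤ dY x → dY x ≤ R - 1 → φ x = 1)
    (hout : ∀ x : V, R < dY x → φ x = 1) :
    ∀ f : G ≃g G, (∀ v : V, φ (f v) = φ v) → (⇑f) '' Y = Y := by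
  classical
  -- basic facts about `dY`
  have hmem : ∀ x : V, ∃ y ∈ Y, G.dist x y = dY x := by
    intro x
    have hne : {n : ℕ | ∃ y ∈ Y, G.dist x y = n}.Nonempty := by
      obtain ⟨y, hy, hd⟩ := hdense x
      exact ⟨G.dist x y, y, hy, rfl⟩
    have h := Nat.sInf_mem hne
    rw [hdY]
    exact h
  have hle : ∀ x : V, ∀ y ∈ Y, dY x ≤ G.dist x y := by
    intro x y hy
    rw [hdY]
    exact Nat.sInf_le ⟨y, hy, rfl⟩
  have hdY0 : ∀ y ∈ Y, dY y = 0 := by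
    intro y hy
    have := hle y y hy
    simpa [SimpleGraph.dist_self] using Nat.le_zero.mp (by simpa [SimpleGraph.dist_self] using this)
  -- uniqueness of nearby points of Y
  have huniq : ∀ x : V, ∀ y ∈ Y, ∀ y' ∈ Y, G.dist x y ≤ R → G.dist x y' ≤ R → y = y' := by
    intro x y hy y' hy' h1 h1'
    by_contra hne
    have hs := hsep y hy y' hy' hne
    have ht : G.dist y y' ≤ G.dist y x + G.dist x y' := hconn.dist_triangle
    have hcomm : G.dist y x = G.dist x y := SimpleGraph.dist_comm
    omega
  -- dist is preserved by isos
  have hdist_le : ∀ (g : G ≃g G) (u v : V), G.dist (g u) (g v) ≤ G.dist u v := by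
    intro g u v
    obtain ⟨p, hp⟩ := (hconn u v).exists_walk_length_eq_dist
    calc G.dist (g u) (g v) ≤ (p.map g.toHom).length := SimpleGraph.dist_le _
      _ = p.length := SimpleGraph.Walk.length_map _ _
      _ = G.dist u v := hp
  have hdist_iso : ∀ (g : G ≃g G) (u v : V), G.dist (g u) (g v) = G.dist u v := by
    intro g u v
    refine le_antisymm (hdist_le g u v) ?_
    have := hdist_le g.symm (g u) (g v)
    simpa using this
  -- Lipschitz property of dY
  have hlip : ∀ u v : V, dY u ≤ G.dist u v + dY v := by
    intro u v
    obtain ⟨y, hy, hd⟩ := hmem v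
    calc dY u ≤ G.dist u y := hle u y hy
      _ ≤ G.dist u v + G.dist v y := hconn.dist_triangle
      _ = G.dist u v + dY v := by rw [hd]
  have hne01 : (1 : Fin 2) ≠ 0 := by decide
  -- Step 1: any φ-preserving automorphism sends Y into the 1-ball of Y
  have L1 : ∀ (g : G ≃g G), (∀ v : V, φ (g v) = φ v) → ∀ y ∈ Y, dY (g y) ≤ 1 := by
    intro g hφ y hy
    by_contra hgt
    push_neg at hgt
    set d := dY (g y) with hd
    have hφ0 : φ (g y) = 0 := by
      rw [hφ y]
      exact h0 y (by rw [hdY0 y hy]; omega)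
    -- d ≥ 2; get the forced color 1 in each case
    rcases Nat.lt_or_ge R d with hRd | hdR
    · exact hne01 (by rw [← hout (g y) hRd, hφ0])
    -- d ≤ R
    rcases Nat.even_or_odd d with hev | hodd'
    · -- even d with 2 ≤ d ≤ R: forced 1
      have : φ (g y) = 1 := by
        rcases Nat.lt_or_ge d 4 with h4 | h4
        · have : d = 2 := by
            rcases hev with ⟨k, hk⟩; omega
          exact h2 (g y) (by omega)
        · refine hA (g y) hev h4 ?_
          -- d even ≤ R, R odd ⇒ d ≤ R - 1
          have : d ≠ R := by
            intro h; rw [h] at hev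
            exact (Nat.not_even_iff_odd.mpr hodd) hev
          omega
      exact hne01 (this ▸ hφ0)
    · -- odd d with 3 ≤ d ≤ R
      have hd3 : 3 ≤ d := by
        rcases hodd' with ⟨k, hk⟩; omega
      obtain ⟨y', hy', hdy'⟩ := hmem (g y)
      have hne0 : G.dist (g y) y' ≠ 0 := by omega
      obtain ⟨p, hp⟩ := SimpleGraph.exists_walk_of_dist_ne_zero hne0
      -- take the first step of the walk
      cases p with
      | nil => simp at hp; simp at hne0
      | cons hadj q =>
        rename_i u
        have hqlen : q.length + 1 = d := by
          simpa [hdy'] using hp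
        have hqd : G.dist u y' ≤ d - 1 := by
          have := SimpleGraph.dist_le q
          omega
        have hdu_le : dY u ≤ d - 1 := le_trans (hle u y' hy') hqd
        have hdu_ge : d - 1 ≤ dY u := by
          have h1 : G.dist (g y) u = 1 := SimpleGraph.dist_eq_one_iff_adj.mpr hadj
          have := hlip (g y) u
          rw [h1] at this
          omega
        have hdu : dY u = d - 1 := le_antisymm hdu_le hdu_ge
        -- d - 1 is even, 2 ≤ d - 1 ≤ R - 1, so φ u = 1
        have hev' : Even (dY u) := by
          rw [hdu]
          rcases hodd' with ⟨k, hk⟩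
          exact ⟨k, by omega⟩
        have hφu : φ u = 1 := by
          rcases Nat.lt_or_ge (dY u) 4 with h4 | h4
          · have : dY u = 2 := by
              rcases hev' with ⟨k, hk⟩; omega
            exact h2 u this
          · exact hA u hev' h4 (by omega)
        -- but g.symm u is adjacent to y, so φ u = φ (g.symm u) = 0
        have hadj' : G.Adj y (g.symm u) := by
          have : G.Adj (g.symm (g y)) (g.symm u) := g.symm.map_adj_iff.mpr hadj
          simpa using this
        have hdYsu : dY (g.symm u) ≤ 1 := by
          have hdist1 : G.dist (g.symm u) y = 1 := by
            rw [SimpleGraph.dist_comm]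
            exact SimpleGraph.dist_eq_one_iff_adj.mpr hadj'
          have := hlip (g.symm u) y
          rw [hdist1, hdY0 y hy] at this
          omega
        have : φ u = 0 := by
          have h1 := hφ (g.symm u)
          rw [show g (g.symm u) = u from g.apply_symm_apply u] at h1
          rw [h1]
          exact h0 _ hdYsu
        exact hne01 (hφu ▸ this)
  -- Step 2: any φ-preserving automorphism sends Y into Y
  have L2 : ∀ (g : G ≃g G), (∀ v : V, φ (g v) = φ v) → ∀ y ∈ Y, g y ∈ Y := by
    intro g hφ y hy
    have h1 := L1 g hφ y hy
    rcases Nat.le_one_iff_eq_zero_or_eq_one.mp h1 with h0' | h1'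
    · -- dY (g y) = 0 : g y ∈ Y
      obtain ⟨y', hy', hd⟩ := hmem (g y)
      rw [h0'] at hd
      have : g y = y' := (hconn.dist_eq_zero_iff).mp hd
      rwa [this]
    · -- dY (g y) = 1 : derive a contradiction using infinite motion
      exfalso
      set x := g y with hx
      obtain ⟨y', hy', hd⟩ := hmem x
      rw [h1'] at hd
      have hxy' : G.Adj x y' := SimpleGraph.dist_eq_one_iff_adj.mp hd
      have hxny' : x ≠ y' := hxy'.ne
      -- claim a: every neighbor of x is y' or adjacent to y'
      have claima : ∀ n : V, G.Adj x n → n = y' ∨ G.Adj y' n := by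
        intro n hn
        have hφn : φ n = 0 := by
          have hadj' : G.Adj y (g.symm n) := by
            have : G.Adj (g.symm x) (g.symm n) := g.symm.map_adj_iff.mpr hn
            simpa [hx] using this
          have hdsn : dY (g.symm n) ≤ 1 := by
            have hdist1 : G.dist (g.symm n) y = 1 := by
              rw [SimpleGraph.dist_comm]
              exact SimpleGraph.dist_eq_one_iff_adj.mpr hadj'
            have := hlip (g.symm n) y
            rw [hdist1, hdY0 y hy] at this
            omega
          have heq := hφ (g.symm n)
          rw [show g (g.symm n) = n from g.apply_symm_apply n] at heq
          rw [heq]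
          exact h0 _ hdsn
        have hdn2 : dY n ≤ 2 := by
          have h1 : G.dist n y' ≤ G.dist n x + G.dist x y' := hconn.dist_triangle
          have h2' : G.dist n x = 1 := by
            rw [SimpleGraph.dist_comm]
            exact SimpleGraph.dist_eq_one_iff_adj.mpr hn
          have := hle n y' hy'
          omega
        have hdn : dY n ≤ 1 := by
          rcases Nat.lt_or_ge (dY n) 2 with h | h
          · omega
          · have : dY n = 2 := by omega
            exact absurd (by rw [← h2 n this, hφn]) hne01
        -- the Y-point near n must be y'
        obtain ⟨y'', hy'', hd''⟩ := hmem n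
        have hyy : y'' = y' := by
          refine huniq n y'' hy'' y' hy' (by omega) ?_
          have h1 : G.dist n y' ≤ G.dist n x + G.dist x y' := hconn.dist_triangle
          have h2' : G.dist n x = 1 := by
            rw [SimpleGraph.dist_comm]
            exact SimpleGraph.dist_eq_one_iff_adj.mpr hn
          omega
        rw [hyy] at hd''
        have : G.dist n y' ≤ 1 := by omega
        rcases Nat.le_one_iff_eq_zero_or_eq_one.mp this with hz | ho
        · left; exact (hconn.dist_eq_zero_iff).mp hz
        · right
          have := SimpleGraph.dist_eq_one_iff_adj.mp ho
          exact this.symm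
      -- claim b: every neighbor of y' other than x is adjacent to x
      have claimb : ∀ m : V, G.Adj y' m → m ≠ x → G.Adj x m := by
        intro m hm hmx
        by_contra hnadj
        have hd2 : G.dist m x = 2 := by
          have hub : G.dist m x ≤ 2 := by
            have h1 : G.dist m x ≤ G.dist m y' + G.dist y' x := hconn.dist_triangle
            have h2' : G.dist m y' = 1 := by
              rw [SimpleGraph.dist_comm]
              exact SimpleGraph.dist_eq_one_iff_adj.mpr hm
            have h3 : G.dist y' x = 1 := by
              rw [SimpleGraph.dist_comm]
              exact hd
            omega
          have hne0 : G.dist m x ≠ 0 := by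
            intro h; exact hmx ((hconn.dist_eq_zero_iff).mp h)
          have hne1 : G.dist m x ≠ 1 := by
            intro h
            exact hnadj (SimpleGraph.dist_eq_one_iff_adj.mp h).symm
          omega
        -- z := g.symm m is at distance 2 from y, hence dY z = 2, φ m = 1
        set z := g.symm m with hz
        have hdzy : G.dist z y = 2 := by
          have h' : G.dist (g z) (g y) = G.dist z y := hdist_iso g z y
          rw [show g z = m from g.apply_symm_apply m, ← hx] at h'
          rw [← h']
          exact hd2
        have hdz : dY z = 2 := by
          have hub : dY z ≤ 2 := by
            have := hle z y hy
            omega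
          rcases Nat.lt_or_ge (dY z) 2 with h | h
          · exfalso
            obtain ⟨y'', hy'', hd''⟩ := hmem z
            have : y'' = y := huniq z y'' hy'' y hy (by omega) (by omega)
            rw [this] at hd''
            omega
          · omega
        have hφm1 : φ m = 1 := by
          have heq := hφ z
          rw [show g z = m from g.apply_symm_apply m] at heq
          rw [heq]
          exact h2 z hdz
        -- but m is adjacent to y', so dY m ≤ 1 and φ m = 0
        have hφm0 : φ m = 0 := by
          refine h0 m ?_
          have hdist1 : G.dist m y' = 1 := by
            rw [SimpleGraph.dist_comm]
            exact SimpleGraph.dist_eq_one_iff_adj.mpr hm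
          have := hle m y' hy'
          omega
        exact hne01 (by rw [← hφm1, hφm0])
      -- x and y' are adjacent closed twins: swapping them is an automorphism
      have hswap_adj : ∀ u v : V, G.Adj u v →
          G.Adj (Equiv.swap x y' u) (Equiv.swap x y' v) := by
        intro u v huv
        rcases eq_or_ne u x with hux | hux
        · rw [hux] at huv ⊢
          rw [Equiv.swap_apply_left]
          rcases eq_or_ne v y' with hvy | hvy
          · rw [hvy, Equiv.swap_apply_right]
            exact hxy'.symm
          · have hvx : v ≠ x := Ne.symm huv.ne
            rw [Equiv.swap_apply_of_ne_of_ne hvx hvy]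
            rcases claima v huv with h | h
            · exact absurd h hvy
            · exact h
        · rcases eq_or_ne u y' with huy | huy
          · rw [huy] at huv ⊢
            rw [Equiv.swap_apply_right]
            rcases eq_or_ne v x with hvx | hvx
            · rw [hvx, Equiv.swap_apply_left]
              exact hxy'
            · have hvy : v ≠ y' := Ne.symm huv.ne
              rw [Equiv.swap_apply_of_ne_of_ne hvx hvy]
              exact claimb v huv hvx
          · rw [Equiv.swap_apply_of_ne_of_ne hux huy]
            rcases eq_or_ne v x with hvx | hvx
            · rw [hvx, Equiv.swap_apply_left]
              rw [hvx] at huv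
              rcases claima u huv.symm with h | h
              · exact absurd h huy
              · exact h.symm
            · rcases eq_or_ne v y' with hvy | hvy
              · rw [hvy, Equiv.swap_apply_right]
                rw [hvy] at huv
                exact (claimb u huv.symm hux).symm
              · rw [Equiv.swap_apply_of_ne_of_ne hvx hvy]
                exact huv
      have hswap_iff : ∀ u v : V,
          G.Adj (Equiv.swap x y' u) (Equiv.swap x y' v) ↔ G.Adj u v := by
        intro u v
        constructor
        · intro h
          have := hswap_adj _ _ h
          simpa using this
        · exact hswap_adj u v
      let g' : G ≃g G := ⟨Equiv.swap x y', by intro u v; exact hswap_iff u v⟩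
      have hfin : {v : V | g' v ≠ v}.Finite := by
        refine Set.Finite.subset ((Set.finite_singleton y').insert x) ?_
        intro v hv
        simp only [Set.mem_setOf_eq] at hv
        by_contra hmem'
        simp only [Set.mem_insert_iff, Set.mem_singleton_iff, not_or] at hmem'
        exact hv (Equiv.swap_apply_of_ne_of_ne hmem'.1 hmem'.2)
      have := hmotion g' hfin x
      have hgx : g' x = y' := Equiv.swap_apply_left x y'
      rw [hgx] at this
      exact hxny' this.symm
  -- conclude
  intro f hφ
  have hφsymm : ∀ v : V, φ (f.symm v) = φ v := by
    intro v
    have h' := hφ (f.symm v)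
    rw [show f (f.symm v) = v from f.apply_symm_apply v] at h'
    exact h'.symm
  apply Set.eq_of_subset_of_subset
  · rintro _ ⟨y, hy, rfl⟩
    exact L2 f hφ y hy
  · intro y hy
    refine ⟨f.symm y, L2 f.symm hφsymm y hy, ?_⟩
    exact f.apply_symm_apply y
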